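/- Let Φ : [0,∞) → [0,∞) satisfy Φ(0)=0, Φ continuous and strictly increasing. Let E ⊂ R^d be compact with finite s-dimensional Hausdorff measure H^s(E) < ∞. Then cap_{Φ,s}(E) = 0, where cap_{Φ,s}(E) = sup{ μ(E) : supp(μ) ⊂ E, ∫₀^∞ Φ(μ(B(x,r))/r^s) dr/r ≤ 1 for all x ∈ R^d }. -/

import Mathlib

open MeasureTheory Metric Set
open scoped ENNReal

/-- The `s`-dimensional Wolff potential of `μ` with gauge `Φ`. -/
noncomputable def wolffPotential (d : ℕ) (s : ℝ) (Φ : ℝ → ℝ)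
    (μ : Measure (EuclideanSpace ℝ (Fin d))) (x : EuclideanSpace ℝ (Fin d)) : ℝ≥0∞ :=
  ∫⁻ r in Set.Ioi (0 : ℝ), ENNReal.ofReal (Φ ((μ (ball x r)).toReal / r ^ s) / r)

/-- The nonlinear capacity associated to the gauge `Φ` (level `1`). -/
noncomputable def capPhi (d : ℕ) (s : ℝ) (Φ : ℝ → ℝ)
    (E : Set (EuclideanSpace ℝ (Fin d))) : ℝ≥0∞ :=
  sSup {m : ℝ≥0∞ | ∃ μ : Measure (EuclideanSpace ℝ (Fin d)), IsFiniteMeasure μ ∧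
    μ Eᶜ = 0 ∧ (∀ x, wolffPotential d s Φ μ x ≤ 1) ∧ m = μ E}

private lemma stepA (d : ℕ) (s t : ℝ) (hs0 : 0 < s) (ht : 0 < t)
    (Φ : ℝ → ℝ) (hΦ0 : Φ 0 = 0) (hΦmono : StrictMonoOn Φ (Set.Ici (0 : ℝ)))
    (μ : Measure (EuclideanSpace ℝ (Fin d))) [IsFiniteMeasure μ]
    (x : EuclideanSpace ℝ (Fin d))
    (hw : (∫⁻ r in Set.Ioi (0 : ℝ),
        ENNReal.ofReal (Φ ((μ (ball x r)).toReal / r ^ s) / r)) ≤ 1) :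
    ∃ ρ > (0:ℝ), ∀ r, 0 < r → r ≤ ρ →
      μ (ball x r) ≤ ENNReal.ofReal (2 ^ s * t * r ^ s) := by
  by_contra hcon
  push_neg at hcon
  set f : ℝ → ℝ≥0∞ :=
    fun r => ENNReal.ofReal (Φ ((μ (ball x r)).toReal / r ^ s) / r) with hf
  have hΦt : 0 < Φ t := by
    have := hΦmono (Set.self_mem_Ici) (le_of_lt ht : (0:ℝ) ≤ t) ht
    rwa [hΦ0] at this
  -- choose a sequence of bad radii
  have step : ∀ ρ : ℝ, 0 < ρ →
      {r : ℝ // (0 < r ∧ ENNReal.ofReal (2 ^ s * t * r ^ s) < μ (ball x r)) ∧ r ≤ ρ} :=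
    fun ρ hρ => ⟨(hcon ρ hρ).choose, ⟨(hcon ρ hρ).choose_spec.1,
      (hcon ρ hρ).choose_spec.2.2⟩, (hcon ρ hρ).choose_spec.2.1⟩
  let u : ℕ → {r : ℝ // 0 < r ∧ ENNReal.ofReal (2 ^ s * t * r ^ s) < μ (ball x r)} :=
    fun n => Nat.rec ⟨(step 1 one_pos).1, (step 1 one_pos).2.1⟩
      (fun _ p => ⟨(step (p.1 / 2) (half_pos p.2.1)).1,
        (step (p.1 / 2) (half_pos p.2.1)).2.1⟩) n
  obtain ⟨r, hrpos, hrbig, hrhalf⟩ : ∃ r : ℕ → ℝ, (∀ n, 0 < r n) ∧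
      (∀ n, ENNReal.ofReal (2 ^ s * t * (r n) ^ s) < μ (ball x (r n))) ∧
      (∀ n, r (n + 1) ≤ r n / 2) :=
    ⟨fun n => (u n).1, fun n => (u n).2.1, fun n => (u n).2.2,
      fun n => (step ((u n).1 / 2) (half_pos (u n).2.1)).2.2⟩
  clear hcon hf
  have hranti : Antitone r := antitone_nat_of_succ_le fun n =>
    (hrhalf n).trans (by linarith [hrpos n])
  have hrsep : ∀ k N, k < N → 2 * r N ≤ r k := by
    intro k N hkN
    have h1 : r N ≤ r (k + 1) := hranti hkN
    have := hrhalf k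
    linarith
  -- each window contributes at least Φ t / 2
  have window : ∀ n, ENNReal.ofReal (Φ t / 2) ≤ ∫⁻ y in Ico (r n) (2 * r n), f y := by
    intro n
    have hrn := hrpos n
    have hvol : volume (Ico (r n) (2 * r n)) = ENNReal.ofReal (r n) := by
      rw [Real.volume_Ico]; congr 1; ring
    have hconst : ENNReal.ofReal (Φ t / 2)
        = ENNReal.ofReal (Φ t / (2 * r n)) * volume (Ico (r n) (2 * r n)) := by
      rw [hvol, ← ENNReal.ofReal_mul (by positivity)]
      congr 1
      field_simp
    rw [hconst]
    rw [← setLIntegral_const]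
    refine lintegral_mono_ae (ae_restrict_of_forall_mem measurableSet_Ico ?_)
    intro y hy
    obtain ⟨hy1, hy2⟩ := hy
    have hy0 : 0 < y := lt_of_lt_of_le hrn hy1
    -- the ratio is at least t
    have hmu : 2 ^ s * t * (r n) ^ s ≤ (μ (ball x y)).toReal := by
      have h1 : μ (ball x (r n)) ≤ μ (ball x y) := measure_mono (ball_subset_ball hy1)
      have h2 : ENNReal.ofReal (2 ^ s * t * (r n) ^ s) ≤ μ (ball x y) :=
        ((hrbig n).le).trans h1
      exact (ENNReal.ofReal_le_iff_le_toReal (measure_ne_top μ _)).1 h2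
    have hys : y ^ s ≤ (2 * r n) ^ s :=
      Real.rpow_le_rpow hy0.le hy2.le hs0.le
    have hratio : t ≤ (μ (ball x y)).toReal / y ^ s := by
      have h2rn : (2 * r n) ^ s = 2 ^ s * (r n) ^ s :=
        Real.mul_rpow (by norm_num) hrn.le
      have hyspos : 0 < y ^ s := Real.rpow_pos_of_pos hy0 s
      rw [le_div_iff₀ hyspos]
      calc t * y ^ s ≤ t * (2 * r n) ^ s := by
            exact mul_le_mul_of_nonneg_left hys ht.le
        _ = 2 ^ s * t * (r n) ^ s := by rw [h2rn]; ring
        _ ≤ _ := hmu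
    have hΦle : Φ t ≤ Φ ((μ (ball x y)).toReal / y ^ s) :=
      (hΦmono.monotoneOn) (le_of_lt ht : (0:ℝ) ≤ t)
        (le_trans ht.le hratio : (0:ℝ) ≤ _) hratio
    refine ENNReal.ofReal_le_ofReal ?_
    exact div_le_div₀ (le_trans hΦt.le hΦle) hΦle hy0 hy2.le
  -- integrals over the disjoint windows add up
  have SN : ∀ N : ℕ, (N : ℝ≥0∞) * ENNReal.ofReal (Φ t / 2)
      ≤ ∫⁻ y in ⋃ k ∈ Finset.range N, Ico (r k) (2 * r k), f y := by
    intro N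
    induction N with
    | zero => simp
    | succ N ih =>
      have hUsub : (⋃ k ∈ Finset.range N, Ico (r k) (2 * r k)) ⊆ Ici (2 * r N) := by
        intro y hy
        simp only [Finset.mem_range, mem_iUnion] at hy
        obtain ⟨k, hkN, hy1, -⟩ := hy
        exact le_trans (hrsep k N hkN) hy1
      have hdisj : Disjoint (⋃ k ∈ Finset.range N, Ico (r k) (2 * r k))
          (Ico (r N) (2 * r N)) := by
        refine Disjoint.mono hUsub (Ico_subset_Iio_self) ?_
        exact (Set.Iio_disjoint_Ici le_rfl).symm
      have hsplit : (⋃ k ∈ Finset.range (N + 1), Ico (r k) (2 * r k))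
          = (⋃ k ∈ Finset.range N, Ico (r k) (2 * r k)) ∪ Ico (r N) (2 * r N) := by
        rw [Finset.range_add_one]
        simp [Set.biUnion_insert, Set.union_comm]
      rw [hsplit, lintegral_union measurableSet_Ico hdisj]
      push_cast
      rw [add_mul, one_mul]
      exact add_le_add ih (window N)
  -- contradiction
  have hc : (0:ℝ≥0∞) < ENNReal.ofReal (Φ t / 2) := by
    exact ENNReal.ofReal_pos.2 (by positivity)
  obtain ⟨N, hN⟩ := ENNReal.exists_nat_gt ((ENNReal.div_lt_top ENNReal.one_ne_top hc.ne').ne)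
  have h1lt : (1:ℝ≥0∞) < (N : ℝ≥0∞) * ENNReal.ofReal (Φ t / 2) := by
    rw [← ENNReal.div_lt_iff (Or.inl hc.ne') (Or.inl ENNReal.ofReal_ne_top)]
    exact hN
  have hle : (N : ℝ≥0∞) * ENNReal.ofReal (Φ t / 2) ≤ 1 := by
    refine le_trans (SN N) (le_trans ?_ hw)
    refine lintegral_mono_set ?_
    intro y hy
    simp only [Finset.mem_range, mem_iUnion] at hy
    obtain ⟨k, -, hy1, -⟩ := hy
    exact lt_of_lt_of_le (hrpos k) hy1
  exact absurd (lt_of_lt_of_le h1lt hle) (lt_irrefl _)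

private lemma stepB (d : ℕ) (s t ρ : ℝ) (hs0 : 0 < s) (ht : 0 < t) (hρ : 0 < ρ)
    (μ : Measure (EuclideanSpace ℝ (Fin d)))
    (E F : Set (EuclideanSpace ℝ (Fin d))) (hFE : F ⊆ E) (hH : μH[s] E ≠ ⊤)
    (hF : ∀ x ∈ F, ∀ r, 0 < r → r ≤ ρ →
      μ (ball x r) ≤ ENNReal.ofReal (2 ^ s * t * r ^ s)) :
    μ F ≤ ENNReal.ofReal (2 ^ s * t) * (μH[s] E + 1) := by
  have hlt : μH[s] F < μH[s] E + 1 :=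
    lt_of_le_of_lt (measure_mono hFE) (ENNReal.lt_add_right hH one_ne_zero)
  have hinf : (⨅ (U : ℕ → Set (EuclideanSpace ℝ (Fin d)))
      (_ : F ⊆ ⋃ n, U n) (_ : ∀ n, EMetric.diam (U n) ≤ ENNReal.ofReal (ρ / 4)),
        ∑' n, ⨆ _ : (U n).Nonempty, EMetric.diam (U n) ^ s) < μH[s] E + 1 := by
    refine lt_of_le_of_lt ?_ hlt
    rw [Measure.hausdorffMeasure_apply]
    exact le_iSup₂ (f := fun (r : ℝ≥0∞) (_ : 0 < r) =>
      ⨅ (U : ℕ → Set (EuclideanSpace ℝ (Fin d)))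
      (_ : F ⊆ ⋃ n, U n) (_ : ∀ n, EMetric.diam (U n) ≤ r),
        ∑' n, ⨆ _ : (U n).Nonempty, EMetric.diam (U n) ^ s)
      (ENNReal.ofReal (ρ / 4)) (ENNReal.ofReal_pos.2 (by positivity))
  simp only [iInf_lt_iff] at hinf
  obtain ⟨U, hcov, hdiam, hsum⟩ := hinf
  -- bound each piece
  have key : ∀ n, μ (U n ∩ F) ≤ ENNReal.ofReal (2 ^ s * t) *
      (⨆ _ : (U n).Nonempty, EMetric.diam (U n) ^ s) := by
    intro n
    rcases Set.eq_empty_or_nonempty (U n ∩ F) with hemp | hne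
    · simp [hemp]
    obtain ⟨x, hxU, hxF⟩ := hne
    have hUne : (U n).Nonempty := ⟨x, hxU⟩
    rw [iSup_pos hUne]
    have hfin : EMetric.diam (U n) ≠ ⊤ :=
      (lt_of_le_of_lt (hdiam n) ENNReal.ofReal_lt_top).ne
    set D : ℝ := (EMetric.diam (U n)).toReal with hD
    have hD0 : 0 ≤ D := ENNReal.toReal_nonneg
    have hD4 : D ≤ ρ / 4 :=
      ENNReal.toReal_le_of_le_ofReal (by positivity) (hdiam n)
    have hball : ∀ η : ℝ, 0 < η → η ≤ ρ / 2 →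
        μ (U n ∩ F) ≤ ENNReal.ofReal (2 ^ s * t * (D + η) ^ s) := by
      intro η hη1 hη2
      have hsub : U n ∩ F ⊆ ball x (D + η) := by
        rintro y ⟨hyU, -⟩
        have h1 : edist y x ≤ EMetric.diam (U n) :=
          EMetric.edist_le_diam_of_mem hyU hxU
        have h2 : dist y x ≤ D := by
          rw [dist_edist]
          exact ENNReal.toReal_mono hfin h1
        exact mem_ball.2 (lt_of_le_of_lt h2 (by linarith))
      refine le_trans (measure_mono hsub) (hF x hxF (D + η) (by linarith) (by linarith))
    have htend : Filter.Tendsto (fun η : ℝ => ENNReal.ofReal (2 ^ s * t * (D + η) ^ s))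
        (nhdsWithin 0 (Set.Ioi 0)) (nhds (ENNReal.ofReal (2 ^ s * t * D ^ s))) := by
      have h1 : Filter.Tendsto (fun η : ℝ => D + η) (nhdsWithin 0 (Set.Ioi 0)) (nhds D) := by
        have : Filter.Tendsto (fun η : ℝ => D + η) (nhds 0) (nhds D) := by
          have := (continuous_const.add continuous_id (f := fun η : ℝ => D)).tendsto (0:ℝ)
          simpa [Pi.add_def] using this
        exact this.mono_left nhdsWithin_le_nhds
      have h2 : ContinuousAt (fun y : ℝ => y ^ s) D :=
        Real.continuousAt_rpow_const D s (Or.inr hs0.le)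
      have h3 : Filter.Tendsto (fun η : ℝ => (D + η) ^ s)
          (nhdsWithin 0 (Set.Ioi 0)) (nhds (D ^ s)) := h2.tendsto.comp h1
      have h4 := (ENNReal.continuous_ofReal.tendsto _).comp (h3.const_mul (2 ^ s * t))
      simpa [Function.comp_def] using h4
    have hle : μ (U n ∩ F) ≤ ENNReal.ofReal (2 ^ s * t * D ^ s) := by
      refine ge_of_tendsto htend ?_
      filter_upwards [Ioc_mem_nhdsGT_of_mem (show (0:ℝ) ∈ Ico (0:ℝ) (ρ/2) from ⟨le_rfl, half_pos hρ⟩)] with η hη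
      exact hball η hη.1 hη.2
    calc μ (U n ∩ F) ≤ ENNReal.ofReal (2 ^ s * t * D ^ s) := hle
      _ = ENNReal.ofReal (2 ^ s * t) * ENNReal.ofReal (D ^ s) := by
          rw [← ENNReal.ofReal_mul (by positivity)]
      _ = ENNReal.ofReal (2 ^ s * t) * EMetric.diam (U n) ^ s := by
          rw [← ENNReal.ofReal_rpow_of_nonneg hD0 hs0.le, ENNReal.ofReal_toReal hfin]
  calc μ F ≤ μ (⋃ n, U n ∩ F) := by
        refine measure_mono ?_
        intro y hy
        obtain ⟨n, hn⟩ := mem_iUnion.1 (hcov hy)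
        exact mem_iUnion.2 ⟨n, hn, hy⟩
    _ ≤ ∑' n, μ (U n ∩ F) := measure_iUnion_le _
    _ ≤ ∑' n, ENNReal.ofReal (2 ^ s * t) *
        (⨆ _ : (U n).Nonempty, EMetric.diam (U n) ^ s) := ENNReal.tsum_le_tsum key
    _ = ENNReal.ofReal (2 ^ s * t) *
        ∑' n, ⨆ _ : (U n).Nonempty, EMetric.diam (U n) ^ s := ENNReal.tsum_mul_left
    _ ≤ ENNReal.ofReal (2 ^ s * t) * (μH[s] E + 1) :=
        mul_le_mul_right hsum.le _

/-- A compact set of finite `s`-dimensional Hausdorff measure has zero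
nonlinear `Φ`-capacity, for any gauge `Φ`. -/
theorem capPhi_of_finite_hausdorff_eq_zero
    (d : ℕ) (hd : 2 ≤ d) (s : ℝ) (hs0 : 0 < s) (hsd : s ≤ d)
    (Φ : ℝ → ℝ) (hΦ0 : Φ 0 = 0) (hΦcont : Continuous Φ)
    (hΦmono : StrictMonoOn Φ (Set.Ici (0 : ℝ)))
    (E : Set (EuclideanSpace ℝ (Fin d))) (hE : IsCompact E)
    (hH : μH[s] E < ⊤) :
    capPhi d s Φ E = 0 := by
  rw [capPhi, ← bot_eq_zero, sSup_eq_bot]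
  rintro m ⟨μ, hfin, -, hwolff, rfl⟩
  rw [bot_eq_zero]
  have key : ∀ t : ℝ, 0 < t → μ E ≤ ENNReal.ofReal (2 ^ s * t) * (μH[s] E + 1) := by
    intro t ht
    set F : ℕ → Set (EuclideanSpace ℝ (Fin d)) := fun n =>
      {x ∈ E | ∀ r : ℝ, 0 < r → r ≤ 1 / (n + 1) →
        μ (ball x r) ≤ ENNReal.ofReal (2 ^ s * t * r ^ s)} with hFdef
    have hcov : E ⊆ ⋃ n, F n := by
      intro x hx
      obtain ⟨ρ, hρ, hball⟩ := stepA d s t hs0 ht Φ hΦ0 hΦmono μ x (hwolff x)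
      obtain ⟨n, hn⟩ := exists_nat_gt (1 / ρ)
      refine mem_iUnion.2 ⟨n, hx, fun r hr hrle => hball r hr (hrle.trans ?_)⟩
      rw [div_le_iff₀ (by positivity)]
      rw [div_lt_iff₀ hρ] at hn
      nlinarith
    have hmono : Monotone F := by
      intro a b hab x hx
      refine ⟨hx.1, fun r hr hrle => hx.2 r hr (hrle.trans ?_)⟩
      have hab' : (a:ℝ) + 1 ≤ (b:ℝ) + 1 := by
        have : (a:ℝ) ≤ (b:ℝ) := Nat.cast_le.2 hab
        linarith
      exact one_div_le_one_div_of_le (by positivity) hab'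
    calc μ E ≤ μ (⋃ n, F n) := measure_mono hcov
      _ = ⨆ n, μ (F n) := hmono.directed_le.measure_iUnion
      _ ≤ ENNReal.ofReal (2 ^ s * t) * (μH[s] E + 1) := by
          refine iSup_le fun n => stepB d s t (1 / (n + 1)) hs0 ht (by positivity) μ E (F n)
            (fun x hx => hx.1) hH.ne (fun x hx => hx.2)
  have htend : Filter.Tendsto (fun t : ℝ => ENNReal.ofReal (2 ^ s * t) * (μH[s] E + 1))
      (nhdsWithin 0 (Set.Ioi 0)) (nhds 0) := by
    have h1 : Filter.Tendsto (fun t : ℝ => ENNReal.ofReal (2 ^ s * t))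
        (nhdsWithin 0 (Set.Ioi 0)) (nhds 0) := by
      have hcont : Continuous (fun t : ℝ => ENNReal.ofReal (2 ^ s * t)) :=
        ENNReal.continuous_ofReal.comp (continuous_const.mul continuous_id)
      exact (hcont.tendsto' 0 0 (by simp)).mono_left nhdsWithin_le_nhds
    have h2 := ENNReal.Tendsto.mul_const h1 (Or.inr (by
      exact (ENNReal.add_lt_top.2 ⟨hH, ENNReal.one_lt_top⟩).ne))
    simpa using h2
  have hle : μ E ≤ 0 := by
    refine ge_of_tendsto htend ?_
    filter_upwards [self_mem_nhdsWithin] with t ht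
    exact key t ht
  exact le_antisymm hle zero_le
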